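/- Let A be a unital commutative ℝ-algebra generated (as an algebra) by a₁,…,a_m, and L : A → ℝ positive semidefinite linear with L(1)=1. The following are equivalent: (i) v_L(a₁² + ⋯ + a_m²) < ∞; (ii) v_L(a_j) < ∞ for all j ∈ {1,…,m}; (iii) v_L(a) < ∞ for all a ∈ A. Moreover, under (i), v_L(a_j) ≤ sqrt(v_L(a₁² + ⋯ + a_m²)) for each j. -/

import Mathlib

open MeasureTheory

variable {A : Type*} [CommRing A] [Algebra ℝ A]

/-- The set of ratios `L(a^{2n+2})/L(a^{2n})` over `n` with `L(a^{2n}) ≠ 0`. -/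
def ratioSet (L : A →ₗ[ℝ] ℝ) (a : A) : Set ℝ :=
  {r | ∃ n : ℕ, L (a ^ (2 * n)) ≠ 0 ∧ r = L (a ^ (2 * n + 2)) / L (a ^ (2 * n))}

/-- `v_L(a) = sqrt( sup_{n, L(a^{2n}) ≠ 0} L(a^{2n+2})/L(a^{2n}) )`. -/
noncomputable def vL (L : A →ₗ[ℝ] ℝ) (a : A) : ℝ :=
  Real.sqrt (sSup (ratioSet L a))

/-- The set of (underlying functions of) ℝ-algebra homomorphisms `A → ℝ`,
as a subset of `A → ℝ` with the topology of pointwise convergence. -/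
def charSet (A : Type*) [CommRing A] [Algebra ℝ A] : Set (A → ℝ) :=
  {φ | ∃ ψ : A →ₐ[ℝ] ℝ, ⇑ψ = φ}

/-! ### Auxiliary lemmas -/

/-- Cauchy–Schwarz for the PSD bilinear form `(x,y) ↦ L(xy)`. -/
lemma aux_cs (L : A →ₗ[ℝ] ℝ) (hpsd : ∀ x : A, 0 ≤ L (x ^ 2)) (x y : A) :
    L (x * y) ^ 2 ≤ L (x ^ 2) * L (y ^ 2) := by
  have key : ∀ t : ℝ, 0 ≤ L (y ^ 2) * (t * t) + (2 * L (x * y)) * t + L (x ^ 2) := by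
    intro t
    have h := hpsd (x + t • y)
    have e : (x + t • y) ^ 2 = x ^ 2 + (2 * t) • (x * y) + (t * t) • (y ^ 2) := by
      simp only [Algebra.smul_def, map_mul, map_ofNat]
      ring
    rw [e, map_add, map_add, LinearMap.map_smul, LinearMap.map_smul] at h
    simp only [smul_eq_mul] at h
    nlinarith
  have hd := discrim_le_zero key
  rw [discrim] at hd
  nlinarith [key 0]

lemma aux_even_nonneg (L : A →ₗ[ℝ] ℝ) (hpsd : ∀ x : A, 0 ≤ L (x ^ 2)) (x : A) (n : ℕ) :
    0 ≤ L (x ^ (2 * n)) := by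
  have h := hpsd (x ^ n)
  rwa [← pow_mul, mul_comm] at h

lemma aux_cs_chain (L : A →ₗ[ℝ] ℝ) (hpsd : ∀ x : A, 0 ≤ L (x ^ 2)) (x : A) (n : ℕ) :
    L (x ^ (2 * (n + 1))) ^ 2 ≤ L (x ^ (2 * n)) * L (x ^ (2 * (n + 2))) := by
  have h := aux_cs L hpsd (x ^ n) (x ^ (n + 2))
  rw [← pow_add, ← pow_mul, ← pow_mul] at h
  have e1 : n + (n + 2) = 2 * (n + 1) := by ring
  have e2 : n * 2 = 2 * n := by ring
  have e3 : (n + 2) * 2 = 2 * (n + 2) := by ring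
  rwa [e1, e2, e3] at h

/-- If `L(x^{2n}) ≤ c^n` for all `n`, then every ratio in `ratioSet L x` is at most `c`. -/
lemma aux_ratio_bound (L : A →ₗ[ℝ] ℝ) (hpsd : ∀ x : A, 0 ≤ L (x ^ 2)) (x : A) (c : ℝ)
    (hc : 0 ≤ c) (hb : ∀ n, L (x ^ (2 * n)) ≤ c ^ n) :
    ∀ r ∈ ratioSet L x, r ≤ c := by
  rintro r ⟨n, hn, rfl⟩
  set t : ℕ → ℝ := fun k => L (x ^ (2 * k)) with ht
  have htn : ∀ k, 0 ≤ t k := fun k => aux_even_nonneg L hpsd x k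
  have hcs : ∀ k, t (k + 1) ^ 2 ≤ t k * t (k + 2) := fun k => aux_cs_chain L hpsd x k
  have htpos : 0 < t n := lt_of_le_of_ne (htn n) (Ne.symm hn)
  have e : (2 * n + 2) = 2 * (n + 1) := by ring
  rw [e]
  show t (n + 1) / t n ≤ c
  by_contra hlt
  push_neg at hlt
  set r := t (n + 1) / t n with hr
  have hr0 : 0 < r := lt_of_le_of_lt hc hlt
  have hrtn : r * t n = t (n + 1) := div_mul_cancel₀ _ hn
  have claim : ∀ k, 0 < t (n + k) ∧ r * t (n + k) ≤ t (n + k + 1) := by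
    intro k
    induction k with
    | zero => exact ⟨htpos, le_of_eq hrtn⟩
    | succ k ih =>
      obtain ⟨h1, h2⟩ := ih
      have h3 : 0 < t (n + k + 1) := lt_of_lt_of_le (mul_pos hr0 h1) h2
      have h4 := hcs (n + k)
      constructor
      · exact h3
      · have : n + (k + 1) + 1 = n + k + 2 := by ring
        rw [this]
        have : n + (k + 1) = n + k + 1 := by ring
        rw [this]
        nlinarith [h4, h2, h1, h3]
  have growth : ∀ k, r ^ k * t n ≤ t (n + k) := by
    intro k
    induction k with
    | zero => simp
    | succ k ih =>
      obtain ⟨h1, h2⟩ := claim k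
      calc r ^ (k + 1) * t n = r * (r ^ k * t n) := by ring
        _ ≤ r * t (n + k) := by nlinarith
        _ ≤ t (n + k + 1) := h2
  rcases eq_or_lt_of_le hc with hc0 | hcpos
  · -- c = 0
    have h1 := hb (n + 1)
    have h2 := (claim 0).2
    simp only [add_zero] at h2
    have : (0:ℝ) ^ (n+1) = 0 := by simp
    rw [← hc0] at h1
    rw [this] at h1
    nlinarith [mul_pos hr0 htpos]
  · -- c > 0
    have hone : 1 < r / c := (one_lt_div hcpos).mpr hlt
    obtain ⟨k, hk⟩ := pow_unbounded_of_one_lt (c ^ n / t n) hone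
    have h1 := growth k
    have h2 := hb (n + k)
    rw [pow_add] at h2
    have h3 : (r / c) ^ k = r ^ k / c ^ k := div_pow r c k
    rw [h3] at hk
    have hck : 0 < c ^ k := pow_pos hcpos k
    have hcn : 0 < c ^ n := pow_pos hcpos n
    rw [div_lt_div_iff₀ htpos hck] at hk
    nlinarith [hk, h1, h2]

/-- Characterization: `ratioSet L x` is bounded above iff the moments grow at most geometrically. -/
lemma aux_bdd_iff (L : A →ₗ[ℝ] ℝ) (hpsd : ∀ x : A, 0 ≤ L (x ^ 2)) (h1 : L 1 = 1) (x : A) :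
    BddAbove (ratioSet L x) ↔ ∃ c : ℝ, 0 ≤ c ∧ ∀ n, L (x ^ (2 * n)) ≤ c ^ n := by
  constructor
  · rintro ⟨u, hu⟩
    refine ⟨max u 0, le_max_right _ _, ?_⟩
    intro n
    induction n with
    | zero => simp [h1]
    | succ n ih =>
      by_cases hz : L (x ^ (2 * n)) = 0
      · have h0 : L (x ^ (2 * (n + 1))) = 0 := by
          have h := aux_cs_chain L hpsd x n
          rw [hz, zero_mul] at h
          nlinarith [sq_nonneg (L (x ^ (2 * (n + 1))))]
        rw [h0]
        positivity
      · have hr : L (x ^ (2 * n + 2)) / L (x ^ (2 * n)) ≤ u :=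
          hu ⟨n, hz, rfl⟩
        have e : 2 * (n + 1) = 2 * n + 2 := by ring
        have heq : L (x ^ (2 * (n + 1))) =
            (L (x ^ (2 * n + 2)) / L (x ^ (2 * n))) * L (x ^ (2 * n)) := by
          rw [div_mul_cancel₀ _ hz, e]
        have htn : 0 ≤ L (x ^ (2 * n)) := aux_even_nonneg L hpsd x n
        have hmax : L (x ^ (2 * n + 2)) / L (x ^ (2 * n)) ≤ max u 0 :=
          le_trans hr (le_max_left _ _)
        have hmax0 : (0:ℝ) ≤ max u 0 := le_max_right _ _
        rw [heq]
        have hps : (max u 0) ^ (n + 1) = (max u 0) ^ n * max u 0 := pow_succ _ _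
        nlinarith [mul_le_mul_of_nonneg_right hmax htn,
          mul_le_mul_of_nonneg_left ih hmax0, hps]
  · rintro ⟨c, hc, hb⟩
    exact ⟨c, fun r hr => aux_ratio_bound L hpsd x c hc hb r hr⟩

/-! ### Sums of squares -/

lemma aux_isSumSq_mul {x y : A} (hx : IsSumSq x) (hy : IsSumSq y) : IsSumSq (x * y) := by
  induction hx with
  | zero => simpa using IsSumSq.zero
  | sq_add a hs ih =>
    rw [add_mul]
    refine IsSumSq.add ?_ ih
    clear ih hs
    induction hy with
    | zero => simpa using IsSumSq.zero
    | sq_add b ht ih2 =>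
      rw [mul_add]
      refine IsSumSq.add ?_ ih2
      have e : a * a * (b * b) = (a * b) * (a * b) + 0 := by ring
      rw [e]
      exact IsSumSq.sq_add _ IsSumSq.zero

lemma aux_isSumSq_sq (x : A) : IsSumSq (x ^ 2) := by
  have h := IsSumSq.sq_add x IsSumSq.zero
  rwa [add_zero, ← sq] at h

lemma aux_isSumSq_sum {ι : Type*} (s : Finset ι) (f : ι → A) :
    IsSumSq (∑ i ∈ s, f i ^ 2) := by
  have := IsSumSq.sum_mul_self s f
  simpa [sq] using this

lemma aux_L_nonneg_sumsq (L : A →ₗ[ℝ] ℝ) (hpsd : ∀ x : A, 0 ≤ L (x ^ 2)) {x : A}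
    (hx : IsSumSq x) : 0 ≤ L x := by
  induction hx with
  | zero => simp
  | sq_add a hs ih =>
    rw [map_add]
    have h := hpsd a
    rw [sq] at h
    linarith

lemma aux_isSumSq_pow {x : A} (hx : IsSumSq x) (n : ℕ) : IsSumSq (x ^ n) := by
  induction n with
  | zero =>
    have h := aux_isSumSq_sq (1 : A)
    rwa [one_pow, ← pow_zero x] at h
  | succ n ih =>
    rw [pow_succ]
    exact aux_isSumSq_mul ih hx

/-- `(∑ aᵢ²)ⁿ - aⱼ^{2n}` is a sum of squares. -/
lemma aux_dominate {m : ℕ} (a : Fin m → A) (j : Fin m) (n : ℕ) :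
    IsSumSq ((∑ i, a i ^ 2) ^ n - a j ^ (2 * n)) := by
  induction n with
  | zero => simpa using IsSumSq.zero
  | succ n ih =>
    have hb : IsSumSq (∑ i, a i ^ 2) := aux_isSumSq_sum _ _
    have hrest : IsSumSq ((∑ i, a i ^ 2) - a j ^ 2) := by
      have e : (∑ i, a i ^ 2) - a j ^ 2 = ∑ i ∈ Finset.univ.erase j, a i ^ 2 := by
        have h := Finset.sum_erase_add Finset.univ (fun i => a i ^ 2) (Finset.mem_univ j)
        linear_combination -h
      rw [e]
      exact aux_isSumSq_sum _ _
    have hsq : IsSumSq (a j ^ (2 * n)) := by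
      have e : a j ^ (2 * n) = (a j ^ n) ^ 2 := by
        rw [← pow_mul]; ring_nf
      rw [e]
      exact aux_isSumSq_sq _
    have e2 : (∑ i, a i ^ 2) ^ (n + 1) - a j ^ (2 * (n + 1)) =
        (∑ i, a i ^ 2) * ((∑ i, a i ^ 2) ^ n - a j ^ (2 * n)) +
          ((∑ i, a i ^ 2) - a j ^ 2) * a j ^ (2 * n) := by
      have e3 : 2 * (n + 1) = 2 * n + 2 := by ring
      rw [e3, pow_add, pow_succ]
      ring
    rw [e2]
    exact (aux_isSumSq_mul hb ih).add (aux_isSumSq_mul hrest hsq)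

lemma aux_le_b (L : A →ₗ[ℝ] ℝ) (hpsd : ∀ x : A, 0 ≤ L (x ^ 2)) {m : ℕ} (a : Fin m → A)
    (j : Fin m) (n : ℕ) : L (a j ^ (2 * n)) ≤ L ((∑ i, a i ^ 2) ^ n) := by
  have h := aux_L_nonneg_sumsq L hpsd (aux_dominate a j n)
  rw [map_sub] at h
  linarith

/-- Quantitative core: under (i), every ratio of `a j` is at most `√(sSup (ratioSet L b))`. -/
lemma aux_main_bound (L : A →ₗ[ℝ] ℝ) (hpsd : ∀ x : A, 0 ≤ L (x ^ 2)) (h1 : L 1 = 1)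
    {m : ℕ} (a : Fin m → A) (hbdd : BddAbove (ratioSet L (∑ i, a i ^ 2))) (j : Fin m) :
    ∀ r ∈ ratioSet L (a j), r ≤ Real.sqrt (sSup (ratioSet L (∑ i, a i ^ 2))) := by
  set b : A := ∑ i, a i ^ 2 with hbdef
  set c : ℝ := sSup (ratioSet L b) with hcdef
  have hmem0 : L (b ^ 2) ∈ ratioSet L b := ⟨0, by simp [h1], by simp [h1]⟩
  have hc0 : 0 ≤ c := le_trans (hpsd b) (le_csSup hbdd hmem0)
  -- Step 1: L(b^{2k}) ≤ c^k
  have hstep1 : ∀ k, L (b ^ (2 * k)) ≤ c ^ k := by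
    intro k
    induction k with
    | zero => simp [h1]
    | succ k ih =>
      by_cases hz : L (b ^ (2 * k)) = 0
      · have h0 : L (b ^ (2 * (k + 1))) = 0 := by
          have h := aux_cs_chain L hpsd b k
          rw [hz, zero_mul] at h
          nlinarith [sq_nonneg (L (b ^ (2 * (k + 1))))]
        rw [h0]; positivity
      · have hr : L (b ^ (2 * k + 2)) / L (b ^ (2 * k)) ≤ c :=
          le_csSup hbdd ⟨k, hz, rfl⟩
        have e : 2 * (k + 1) = 2 * k + 2 := by ring
        have heq : L (b ^ (2 * (k + 1))) =
            (L (b ^ (2 * k + 2)) / L (b ^ (2 * k))) * L (b ^ (2 * k)) := by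
          rw [div_mul_cancel₀ _ hz, e]
        have htn : 0 ≤ L (b ^ (2 * k)) := aux_even_nonneg L hpsd b k
        rw [heq]
        have hps : c ^ (k + 1) = c ^ k * c := pow_succ _ _
        nlinarith [mul_le_mul_of_nonneg_right hr htn,
          mul_le_mul_of_nonneg_left ih hc0, hps]
  -- Step 2: L(b^m) ≤ (√c)^m for all m
  have hsos : ∀ k, 0 ≤ L (b ^ k) :=
    fun k => aux_L_nonneg_sumsq L hpsd (aux_isSumSq_pow (aux_isSumSq_sum _ _) k)
  have hsqrtc : Real.sqrt c ^ 2 = c := Real.sq_sqrt hc0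
  have hstep2 : ∀ k, L (b ^ k) ≤ Real.sqrt c ^ k := by
    intro k
    rcases Nat.even_or_odd k with ⟨l, hl⟩ | ⟨l, hl⟩
    · have e : k = 2 * l := by omega
      rw [e]
      calc L (b ^ (2 * l)) ≤ c ^ l := hstep1 l
        _ = Real.sqrt c ^ (2 * l) := by rw [pow_mul, hsqrtc]
    · have e : k = 2 * l + 1 := by omega
      subst e
      have hcs := aux_cs L hpsd (b ^ l) (b ^ (l + 1))
      rw [← pow_add, ← pow_mul, ← pow_mul] at hcs
      have e1 : l + (l + 1) = 2 * l + 1 := by ring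
      have e2 : l * 2 = 2 * l := by ring
      have e3 : (l + 1) * 2 = 2 * (l + 1) := by ring
      rw [e1, e2, e3] at hcs
      have h1 := hstep1 l
      have h2 := hstep1 (l + 1)
      have hs0 : 0 ≤ Real.sqrt c := Real.sqrt_nonneg c
      have hrhs : Real.sqrt c ^ (2 * l + 1) * Real.sqrt c ^ (2 * l + 1) = c ^ l * c ^ (l + 1) := by
        rw [← pow_add, show (2 * l + 1) + (2 * l + 1) = 2 * (2 * l + 1) from by ring,
          pow_mul, hsqrtc, ← pow_add]
        congr 1
        omega
      nlinarith [hsos (2 * l + 1), pow_nonneg hs0 (2 * l + 1), hrhs, h1, h2,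
        mul_le_mul h1 h2 (aux_even_nonneg L hpsd b (l + 1)) (pow_nonneg hc0 l),
        aux_even_nonneg L hpsd b l, aux_even_nonneg L hpsd b (l + 1)]
  -- Step 3: L(a j ^{2n}) ≤ (√c)^n
  have hstep3 : ∀ n, L (a j ^ (2 * n)) ≤ Real.sqrt c ^ n :=
    fun n => le_trans (aux_le_b L hpsd a j n) (hstep2 n)
  exact aux_ratio_bound L hpsd (a j) _ (Real.sqrt_nonneg c) hstep3

theorem stmt14 (m : ℕ) (a : Fin m → A) (hgen : Algebra.adjoin ℝ (Set.range a) = ⊤)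
    (L : A →ₗ[ℝ] ℝ) (hpsd : ∀ x : A, 0 ≤ L (x ^ 2)) (h1 : L 1 = 1) :
    ((BddAbove (ratioSet L (∑ i, a i ^ 2)) ↔ ∀ j, BddAbove (ratioSet L (a j))) ∧
     ((∀ j, BddAbove (ratioSet L (a j))) ↔ ∀ x : A, BddAbove (ratioSet L x))) ∧
    (BddAbove (ratioSet L (∑ i, a i ^ 2)) →
      ∀ j, vL L (a j) ≤ Real.sqrt (vL L (∑ i, a i ^ 2))) := by
  classical
  -- the "good" predicate
  set P : A → Prop := fun x => ∃ c : ℝ, 0 ≤ c ∧ ∀ n, L (x ^ (2 * n)) ≤ c ^ n with hP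
  have hchar : ∀ x : A, BddAbove (ratioSet L x) ↔ P x := fun x => aux_bdd_iff L hpsd h1 x
  -- P is closed under the algebra operations
  have hPalg : ∀ r : ℝ, P (algebraMap ℝ A r) := by
    intro r
    refine ⟨r ^ 2, sq_nonneg r, fun n => ?_⟩
    rw [← map_pow, Algebra.algebraMap_eq_smul_one, LinearMap.map_smul, h1, smul_eq_mul, mul_one, ← pow_mul]
  have hPadd : ∀ x y : A, P x → P y → P (x + y) := by
    rintro x y ⟨cx, hcx, hx⟩ ⟨cy, hcy, hy⟩
    set M : ℝ := max cx cy with hM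
    have hM0 : 0 ≤ M := le_trans hcx (le_max_left _ _)
    refine ⟨4 * M, by positivity, fun n => ?_⟩
    have hterm : ∀ k ∈ Finset.range (2 * n + 1),
        L (x ^ k * y ^ (2 * n - k) * ((2 * n).choose k : A)) ≤
          ((2 * n).choose k : ℝ) * M ^ n := by
      intro k hk
      have hk' : k ≤ 2 * n := Nat.lt_succ_iff.mp (Finset.mem_range.mp hk)
      -- rewrite the Nat cast as an nsmul
      have ecast : x ^ k * y ^ (2 * n - k) * ((2 * n).choose k : A) =
          ((2 * n).choose k) • (x ^ k * y ^ (2 * n - k)) := by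
        rw [nsmul_eq_mul]; ring
      rw [ecast, map_nsmul, nsmul_eq_mul]
      have hCS := aux_cs L hpsd (x ^ k) (y ^ (2 * n - k))
      rw [← pow_mul, ← pow_mul] at hCS
      have e1 : k * 2 = 2 * k := by ring
      have e2 : (2 * n - k) * 2 = 2 * (2 * n - k) := by ring
      rw [e1, e2] at hCS
      have hbx : L (x ^ (2 * k)) ≤ M ^ k :=
        le_trans (hx k) (pow_le_pow_left₀ hcx (le_max_left _ _) k)
      have hby : L (y ^ (2 * (2 * n - k))) ≤ M ^ (2 * n - k) :=
        le_trans (hy (2 * n - k)) (pow_le_pow_left₀ hcy (le_max_right _ _) (2 * n - k))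
      have hprod : M ^ k * M ^ (2 * n - k) = M ^ n * M ^ n := by
        rw [← pow_add, ← pow_add]
        congr 1
        omega
      have hnx : 0 ≤ L (x ^ (2 * k)) := aux_even_nonneg L hpsd x k
      have hny : 0 ≤ L (y ^ (2 * (2 * n - k))) := aux_even_nonneg L hpsd y (2 * n - k)
      have hMn : 0 ≤ M ^ n := pow_nonneg hM0 n
      have hLle : L (x ^ k * y ^ (2 * n - k)) ≤ M ^ n := by
        nlinarith [hCS, hbx, hby, hnx, hny, hMn,
          mul_le_mul hbx hby hny (pow_nonneg hM0 k)]
      have hC0 : (0:ℝ) ≤ ((2 * n).choose k : ℝ) := Nat.cast_nonneg _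
      nlinarith [hLle, hC0]
    calc L ((x + y) ^ (2 * n))
        = ∑ k ∈ Finset.range (2 * n + 1),
            L (x ^ k * y ^ (2 * n - k) * ((2 * n).choose k : A)) := by
          rw [add_pow, map_sum]
      _ ≤ ∑ k ∈ Finset.range (2 * n + 1), ((2 * n).choose k : ℝ) * M ^ n :=
          Finset.sum_le_sum hterm
      _ = (∑ k ∈ Finset.range (2 * n + 1), ((2 * n).choose k : ℝ)) * M ^ n := by
          rw [Finset.sum_mul]
      _ = (2 ^ (2 * n) : ℝ) * M ^ n := by
          norm_cast
          rw [Nat.sum_range_choose]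
      _ = (4 * M) ^ n := by
          rw [mul_pow, pow_mul]
          norm_num
  have hPmul : ∀ x y : A, P x → P y → P (x * y) := by
    rintro x y ⟨cx, hcx, hx⟩ ⟨cy, hcy, hy⟩
    refine ⟨cx * cy, mul_nonneg hcx hcy, fun n => ?_⟩
    have hCS := aux_cs L hpsd (x ^ (2 * n)) (y ^ (2 * n))
    rw [← pow_mul, ← pow_mul] at hCS
    have e1 : 2 * n * 2 = 2 * (2 * n) := by ring
    rw [e1] at hCS
    have e2 : x ^ (2 * n) * y ^ (2 * n) = (x * y) ^ (2 * n) := (mul_pow x y (2 * n)).symm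
    rw [e2] at hCS
    have hbx := hx (2 * n)
    have hby := hy (2 * n)
    have hnz : 0 ≤ L ((x * y) ^ (2 * n)) := aux_even_nonneg L hpsd (x * y) n
    have hnx : 0 ≤ L (x ^ (2 * (2 * n))) := aux_even_nonneg L hpsd x (2 * n)
    have hny : 0 ≤ L (y ^ (2 * (2 * n))) := aux_even_nonneg L hpsd y (2 * n)
    have hrhs : (cx * cy) ^ n * (cx * cy) ^ n = cx ^ (2 * n) * cy ^ (2 * n) := by
      rw [← pow_add, mul_pow, show n + n = 2 * n from by ring]
    nlinarith [hCS, hbx, hby, hnz, pow_nonneg (mul_nonneg hcx hcy) n,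
      mul_le_mul hbx hby hny (pow_nonneg hcx (2 * n))]
  -- all of A is good, provided the generators are
  have hall : (∀ j, BddAbove (ratioSet L (a j))) → ∀ x : A, BddAbove (ratioSet L x) := by
    intro hj x
    rw [hchar]
    have hx : x ∈ Algebra.adjoin ℝ (Set.range a) := by rw [hgen]; trivial
    induction hx using Algebra.adjoin_induction with
    | mem z hz =>
      obtain ⟨j, rfl⟩ := hz
      exact (hchar (a j)).mp (hj j)
    | algebraMap r => exact hPalg r
    | add z w _ _ hz hw => exact hPadd z w hz hw
    | mul z w _ _ hz hw => exact hPmul z w hz hw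
  have i_to_ii : BddAbove (ratioSet L (∑ i, a i ^ 2)) → ∀ j, BddAbove (ratioSet L (a j)) := by
    intro hbdd j
    exact ⟨Real.sqrt (sSup (ratioSet L (∑ i, a i ^ 2))),
      fun r hr => aux_main_bound L hpsd h1 a hbdd j r hr⟩
  refine ⟨⟨⟨i_to_ii, fun h => hall h _⟩, ⟨hall, fun h j => h (a j)⟩⟩, ?_⟩
  intro hbdd j
  have hne : (ratioSet L (a j)).Nonempty := ⟨L (a j ^ 2), 0, by simp [h1], by simp [h1]⟩
  have hsup : sSup (ratioSet L (a j)) ≤ Real.sqrt (sSup (ratioSet L (∑ i, a i ^ 2))) :=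
    csSup_le hne (aux_main_bound L hpsd h1 a hbdd j)
  unfold vL
  exact Real.sqrt_le_sqrt hsup
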